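/- For every real number M > 0 and every (τ,x) with (1-τ)² - x² < 1, the radius function r(τ,x) = r_M((1-τ)² - x²) has partial derivatives ∂_τ r(τ,x) = (Ω²(τ,x)/(4M))·(1-τ) and ∂_x r(τ,x) = (Ω²(τ,x)/(4M))·x, where Ω²(τ,x) = (32M³/r(τ,x))·exp(-r(τ,x)/(2M)). -/

import Mathlib

open Topology Filter

/-- The Kruskal relation function `f_M(ρ) = (1 - ρ/(2M))·exp(ρ/(2M))`. -/
noncomputable def fM (M ρ : ℝ) : ℝ := (1 - ρ / (2 * M)) * Real.exp (ρ / (2 * M))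

/-- The radius function in the `(τ,x)` coordinates: `r(τ,x) = r_M((1-τ)² - x²)`. -/
noncomputable def rr (rM : ℝ → ℝ) (τ x : ℝ) : ℝ := rM ((1 - τ) ^ 2 - x ^ 2)

/-- The conformal factor `Ω²(τ,x) = (32M³/r(τ,x))·exp(-r(τ,x)/(2M))`. -/
noncomputable def Om2 (M : ℝ) (rM : ℝ → ℝ) (τ x : ℝ) : ℝ :=
  32 * M ^ 3 / rr rM τ x * Real.exp (-(rr rM τ x) / (2 * M))

lemma fM_hasDerivAt (M : ℝ) (hM : 0 < M) (ρ : ℝ) :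
    HasDerivAt (fM M) (-(ρ / (4 * M ^ 2)) * Real.exp (ρ / (2 * M))) ρ := by
  have h1 : HasDerivAt (fun ρ : ℝ => ρ / (2 * M)) (1 / (2 * M)) ρ := by
    simpa using (hasDerivAt_id ρ).div_const (2 * M)
  have h2 : HasDerivAt (fun ρ : ℝ => 1 - ρ / (2 * M)) (-(1 / (2 * M))) ρ := by
    simpa using h1.const_sub (1:ℝ)
  have h3 : HasDerivAt (fun ρ : ℝ => Real.exp (ρ / (2 * M)))
      (Real.exp (ρ / (2 * M)) * (1 / (2 * M))) ρ := (Real.hasDerivAt_exp _).comp ρ h1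
  have := h2.mul h3
  refine this.congr_deriv ?_
  have : (2 * M) ≠ 0 := by positivity
  field_simp
  ring

lemma fM_strictAnti (M : ℝ) (hM : 0 < M) : StrictAntiOn (fM M) (Set.Ici 0) := by
  apply strictAntiOn_of_deriv_neg (convex_Ici 0)
  · exact fun x _ => ((fM_hasDerivAt M hM x).continuousAt).continuousWithinAt
  · intro x hx
    rw [interior_Ici] at hx
    rw [(fM_hasDerivAt M hM x).deriv]
    have : 0 < x := hx
    have : 0 < x / (4 * M ^ 2) := by positivity
    nlinarith [Real.exp_pos (x / (2 * M))]

/-- For every `M > 0` and `(τ,x)` with `(1-τ)² - x² < 1`, the radius function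
`r(τ,x) = r_M((1-τ)² - x²)` has partial derivatives
`∂_τ r = (Ω²/(4M))·(1-τ)` and `∂_x r = (Ω²/(4M))·x`. -/
theorem radius_partials_tau_x (M : ℝ) (hM : 0 < M) (rM : ℝ → ℝ)
    (hrM : ∀ s : ℝ, s < 1 → 0 < rM s ∧ fM M (rM s) = s)
    (τ x : ℝ) (h : (1 - τ) ^ 2 - x ^ 2 < 1) :
    HasDerivAt (fun t : ℝ => rr rM t x) (Om2 M rM τ x / (4 * M) * (1 - τ)) τ ∧
    HasDerivAt (fun y : ℝ => rr rM τ y) (Om2 M rM τ x / (4 * M) * x) x := by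
  set s₀ : ℝ := (1 - τ) ^ 2 - x ^ 2 with hs₀
  set r : ℝ := rM s₀ with hr
  have hrpos : 0 < r := (hrM s₀ h).1
  have hanti := fM_strictAnti M hM
  -- rM is a right inverse of fM on positives
  have hright : ∀ ρ : ℝ, 0 < ρ → rM (fM M ρ) = ρ := by
    intro ρ hρ
    have hlt : fM M ρ < 1 := by
      have := hanti (Set.self_mem_Ici) (le_of_lt hρ) hρ
      simpa [fM] using this
    have h1 := (hrM _ hlt).1
    have h2 := (hrM _ hlt).2
    exact hanti.injOn (le_of_lt h1) (le_of_lt hρ) h2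
  -- rM is strictly antitone on Iio 1
  have hrManti : StrictMonoOn (fun s => -rM s) (Set.Iio 1) := by
    intro a ha b hb hab
    simp only [neg_lt_neg_iff]
    by_contra hc
    push_neg at hc
    rcases lt_or_eq_of_le hc with hlt | heq
    · have := hanti (le_of_lt (hrM a ha).1) (le_of_lt (hrM b hb).1) hlt
      rw [(hrM a ha).2, (hrM b hb).2] at this
      exact absurd hab (not_lt.2 (le_of_lt this))
    · have : a = b := by rw [← (hrM a ha).2, ← (hrM b hb).2, heq]
      exact absurd this (ne_of_lt hab)
  -- continuity of rM at s₀
  have hcont : ContinuousAt rM s₀ := by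
    have himg : (fun s => -rM s) '' Set.Iio 1 ∈ 𝓝 (-rM s₀) := by
      have hsub : Set.Iio (0:ℝ) ⊆ (fun s => -rM s) '' Set.Iio 1 := by
        intro y hy
        refine ⟨fM M (-y), ?_, ?_⟩
        · have := hanti Set.self_mem_Ici (Set.mem_Ici.2 (le_of_lt (neg_pos.2 hy))) (neg_pos.2 hy)
          simpa [fM] using this
        · show -rM (fM M (-y)) = y
          rw [hright (-y) (neg_pos.2 hy)]; ring
      exact Filter.mem_of_superset (Iio_mem_nhds (neg_neg_iff_pos.2 hrpos)) hsub
    have := hrManti.continuousAt_of_image_mem_nhds (Iio_mem_nhds h) himg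
    have := this.neg
    simpa only [Pi.neg_def, neg_neg] using this
  -- derivative of rM at s₀
  have hfr := fM_hasDerivAt M hM r
  have hf'ne : -(r / (4 * M ^ 2)) * Real.exp (r / (2 * M)) ≠ 0 := by
    have := Real.exp_pos (r / (2 * M))
    have : 0 < r / (4 * M ^ 2) := by positivity
    nlinarith [Real.exp_pos (r / (2 * M))]
  have hfg : ∀ᶠ y in 𝓝 s₀, fM M (rM y) = y := by
    filter_upwards [Iio_mem_nhds h] with y hy using (hrM y hy).2
  have hrMderiv : HasDerivAt rM (-(r / (4 * M ^ 2)) * Real.exp (r / (2 * M)))⁻¹ s₀ :=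
    HasDerivAt.of_local_left_inverse hcont (hr ▸ hfr) hf'ne hfg
  -- the derivative value
  have hO : Om2 M rM τ x / (4 * M) =
      (-(r / (4 * M ^ 2)) * Real.exp (r / (2 * M)))⁻¹ * (-2 : ℝ) := by
    rw [Om2]
    have hrr : rr rM τ x = r := rfl
    rw [hrr, neg_div, Real.exp_neg]
    have hne : Real.exp (r / (2 * M)) ≠ 0 := ne_of_gt (Real.exp_pos _)
    field_simp
    ring
  constructor
  · have hin : HasDerivAt (fun t : ℝ => (1 - t) ^ 2 - x ^ 2) (2 * (1 - τ) * (-1)) τ := by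
      have h1 : HasDerivAt (fun t : ℝ => 1 - t) (-1 : ℝ) τ := by
        simpa using (hasDerivAt_id τ).const_sub (1:ℝ)
      simpa using (h1.pow 2).sub_const (x ^ 2)
    have := hrMderiv.comp τ hin
    refine this.congr_deriv ?_
    rw [hO]; ring
  · have hin : HasDerivAt (fun y : ℝ => (1 - τ) ^ 2 - y ^ 2) (-(2 * x)) x := by
      have h1 : HasDerivAt (fun y : ℝ => y ^ 2) (2 * x) x := by
        simpa using (hasDerivAt_pow 2 x)
      simpa using h1.const_sub ((1 - τ)^2)
    have := hrMderiv.comp x hin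
    refine this.congr_deriv ?_
    rw [hO]; ring
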